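/- Let g : ℝ^q → ℝ ∪ {∞} be defined by g(v) = λ·𝟙{v ≠ 0} + δ_{B_α}(v), where B_α is the closed Euclidean ball of radius α > 0 and λ > 0. Then for v ∈ B_α: the regular (Fréchet) subdifferential of g at v equals the normal cone N_{B_α}(v) if v ≠ 0, and equals all of ℝ^q if v = 0. -/

import Mathlib

open scoped Classical

/-- The regular (Fréchet) subdifferential of an extended-real-valued function `g` at a
point `v` where `g v` is finite: `ζ` belongs to it iff
`liminf_{w→v, w≠v} (g w − g v − ⟨ζ, w−v⟩)/‖w−v‖ ≥ 0`, expressed equivalently as: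
for every `ε > 0`, eventually near `v` (punctured) one has
`g v + ⟨ζ, w−v⟩ − ε‖w−v‖ ≤ g w`. -/
def regSubdiff {q : ℕ} (g : EuclideanSpace ℝ (Fin q) → EReal)
    (v : EuclideanSpace ℝ (Fin q)) : Set (EuclideanSpace ℝ (Fin q)) :=
  {ζ | ∀ ε : ℝ, 0 < ε → ∀ᶠ w in nhdsWithin v {v}ᶜ,
      (((g v).toReal + (inner ℝ ζ (w - v) : ℝ) - ε * ‖w - v‖ : ℝ) : EReal) ≤ g w}

/-- For `g(v) = λ·𝟙{v ≠ 0} + δ_{B_α}(v)` and `v ∈ B_α`: the regular subdifferential of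
`g` at `v` equals the normal cone `N_{B_α}(v)` if `v ≠ 0`, and equals all of `ℝ^q`
if `v = 0`. -/
theorem regSubdiff_l0_ball {q : ℕ} (lam α : ℝ) (hlam : 0 < lam) (hα : 0 < α)
    (g : EuclideanSpace ℝ (Fin q) → EReal)
    (hg : g = fun v => if ‖v‖ ≤ α then (if v = 0 then (0 : EReal) else (lam : ℝ)) else ⊤)
    (v : EuclideanSpace ℝ (Fin q)) (hv : ‖v‖ ≤ α) :
    (v ≠ 0 → regSubdiff g v =
      {u : EuclideanSpace ℝ (Fin q) | ∀ w, ‖w‖ ≤ α → (inner ℝ u (w - v) : ℝ) ≤ 0}) ∧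
    (v = 0 → regSubdiff g v = Set.univ) := by
  constructor
  · -- case v ≠ 0
    intro hvne
    have hgv : g v = ((lam : ℝ) : EReal) := by simp [hg, hv, hvne]
    have hgvt : (g v).toReal = lam := by rw [hgv]; exact EReal.toReal_coe lam
    ext ζ
    simp only [regSubdiff, Set.mem_setOf_eq]
    constructor
    · intro hζ w hw
      by_cases hwv : w = v
      · simp [hwv]
      have hd : w - v ≠ 0 := sub_ne_zero.mpr hwv
      have hdn : 0 < ‖w - v‖ := norm_pos_iff.mpr hd
      have key : ∀ ε : ℝ, 0 < ε → (inner ℝ ζ (w - v) : ℝ) ≤ ε * ‖w - v‖ := by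
        intro ε hε
        have hev := hζ ε hε
        set γ : ℝ → EuclideanSpace ℝ (Fin q) := fun t => v + t • (w - v) with hγdef
        have hcont : Filter.Tendsto γ (nhds 0) (nhds v) := by
          have hc : Continuous γ := by
            apply continuous_const.add
            exact (continuous_id.smul continuous_const)
          have h0 : γ 0 = v := by simp [hγdef]
          simpa [h0] using hc.tendsto 0
        have htend : Filter.Tendsto γ (nhdsWithin (0:ℝ) (Set.Ioi 0))
            (nhdsWithin v {v}ᶜ) := by
          apply tendsto_nhdsWithin_of_tendsto_nhds_of_eventually_within
          · exact hcont.mono_left nhdsWithin_le_nhds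
          · filter_upwards [self_mem_nhdsWithin] with t ht
            simp only [Set.mem_compl_iff, Set.mem_singleton_iff, hγdef]
            intro hcon
            have ht0 : (0:ℝ) < t := ht
            have : t • (w - v) = 0 := by
              have := hcon
              have h' : v + t • (w - v) = v + 0 := by simpa using this
              exact add_left_cancel h'
            rcases smul_eq_zero.mp this with h | h
            · exact absurd h (ne_of_gt ht0)
            · exact hd h
        have hev2 := htend.eventually hev
        have h1 : ∀ᶠ t in nhdsWithin (0:ℝ) (Set.Ioi 0), t < 1 := by
          apply eventually_nhdsWithin_of_eventually_nhds
          filter_upwards [Metric.ball_mem_nhds (0:ℝ) one_pos] with t ht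
          have := abs_lt.mp (by simpa [Real.dist_eq] using ht)
          exact this.2
        have h0 : ∀ᶠ t in nhdsWithin (0:ℝ) (Set.Ioi 0), 0 < t :=
          self_mem_nhdsWithin
        obtain ⟨t, hP, ht0, ht1⟩ := (hev2.and (h0.and h1)).exists
        -- compute
        have hγv : γ t - v = t • (w - v) := by simp [hγdef]
        have hnormγ : ‖γ t‖ ≤ α := by
          have hrw : γ t = (1 - t) • v + t • w := by
            simp only [hγdef, smul_sub, sub_smul, one_smul]
            abel
          calc ‖γ t‖ = ‖(1 - t) • v + t • w‖ := by rw [hrw]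
            _ ≤ ‖(1 - t) • v‖ + ‖t • w‖ := norm_add_le _ _
            _ = (1 - t) * ‖v‖ + t * ‖w‖ := by
                rw [norm_smul, norm_smul, Real.norm_eq_abs, Real.norm_eq_abs,
                  abs_of_nonneg (by linarith), abs_of_nonneg ht0.le]
            _ ≤ (1 - t) * α + t * α := by
                have h1t : (0:ℝ) ≤ 1 - t := by linarith
                exact add_le_add (mul_le_mul_of_nonneg_left hv h1t)
                  (mul_le_mul_of_nonneg_left hw ht0.le)
            _ = α := by ring
        have hgγ : g (γ t) ≤ ((lam : ℝ) : EReal) := by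
          simp only [hg, hnormγ, if_true]
          split_ifs with h
          · exact_mod_cast hlam.le
          · exact le_refl _
        have hreal : (((g v).toReal + (inner ℝ ζ (γ t - v) : ℝ) - ε * ‖γ t - v‖ : ℝ) : EReal)
            ≤ ((lam : ℝ) : EReal) := le_trans hP hgγ
        have hreal' : (g v).toReal + (inner ℝ ζ (γ t - v) : ℝ) - ε * ‖γ t - v‖ ≤ lam :=
          EReal.coe_le_coe_iff.mp hreal
        rw [hgvt, hγv] at hreal'
        have hin : (inner ℝ ζ (t • (w - v)) : ℝ) = t * (inner ℝ ζ (w - v) : ℝ) :=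
          real_inner_smul_right ζ _ t
        have hno : ‖t • (w - v)‖ = t * ‖w - v‖ := by
          rw [norm_smul, Real.norm_eq_abs, abs_of_nonneg ht0.le]
        rw [hin, hno] at hreal'
        have : t * (inner ℝ ζ (w - v) : ℝ) ≤ t * (ε * ‖w - v‖) := by nlinarith
        exact le_of_mul_le_mul_left (by linarith [this]) ht0
      -- conclude inner ≤ 0
      by_contra hpos
      push_neg at hpos
      have hε : 0 < (inner ℝ ζ (w - v) : ℝ) / (2 * ‖w - v‖) := by positivity
      have h := key _ hε
      have heq : (inner ℝ ζ (w - v) : ℝ) / (2 * ‖w - v‖) * ‖w - v‖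
          = (inner ℝ ζ (w - v) : ℝ) / 2 := by
        field_simp
      rw [heq] at h
      linarith
    · intro hζ ε hε
      have hball : Metric.ball v ‖v‖ ∈ nhds v :=
        Metric.ball_mem_nhds v (norm_pos_iff.mpr hvne)
      have hmem : Metric.ball v ‖v‖ ∈ nhdsWithin v {v}ᶜ :=
        nhdsWithin_le_nhds hball
      filter_upwards [hmem] with w hwball
      by_cases hwa : ‖w‖ ≤ α
      · have hw0 : w ≠ 0 := by
          intro h
          rw [h] at hwball
          simp [Metric.mem_ball, dist_eq_norm] at hwball
        have hgw : g w = ((lam : ℝ) : EReal) := by simp [hg, hwa, hw0]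
        rw [hgw, hgvt]
        apply EReal.coe_le_coe_iff.mpr
        have h1 : (inner ℝ ζ (w - v) : ℝ) ≤ 0 := hζ w hwa
        have h2 : 0 ≤ ε * ‖w - v‖ := by positivity
        linarith
      · have hgw : g w = ⊤ := by simp [hg, hwa]
        rw [hgw]; exact le_top
  · -- case v = 0
    intro hv0
    subst hv0
    ext ζ
    simp only [Set.mem_univ, iff_true, regSubdiff, Set.mem_setOf_eq]
    intro ε hε
    have hgv : g 0 = (0 : EReal) := by simp [hg, hα.le]
    have hr : (0:ℝ) < min α (lam / (‖ζ‖ + 1)) := by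
      apply lt_min hα
      positivity
    have hmem : Metric.ball (0 : EuclideanSpace ℝ (Fin q)) (min α (lam / (‖ζ‖ + 1)))
        ∈ nhdsWithin (0 : EuclideanSpace ℝ (Fin q)) {(0 : EuclideanSpace ℝ (Fin q))}ᶜ :=
      nhdsWithin_le_nhds (Metric.ball_mem_nhds _ hr)
    filter_upwards [hmem, self_mem_nhdsWithin] with w hwball hwne
    have hwne' : w ≠ 0 := hwne
    have hwn : ‖w‖ < min α (lam / (‖ζ‖ + 1)) := by
      simpa [dist_eq_norm] using hwball
    have hwa : ‖w‖ ≤ α := le_of_lt (lt_of_lt_of_le hwn (min_le_left _ _))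
    have hgw : g w = ((lam : ℝ) : EReal) := by simp [hg, hwa, hwne']
    rw [hgw, hgv]
    apply EReal.coe_le_coe_iff.mpr
    have hiw : (inner ℝ ζ (w - 0) : ℝ) ≤ ‖ζ‖ * ‖w‖ := by
      calc (inner ℝ ζ (w - 0) : ℝ) ≤ ‖ζ‖ * ‖w - 0‖ := real_inner_le_norm ζ _
        _ = ‖ζ‖ * ‖w‖ := by rw [sub_zero]
    have hw2 : ‖w‖ < lam / (‖ζ‖ + 1) := lt_of_lt_of_le hwn (min_le_right _ _)
    have hζ1 : (0:ℝ) < ‖ζ‖ + 1 := by positivity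
    have : (‖ζ‖ + 1) * ‖w‖ < lam := by
      rw [mul_comm]
      exact (lt_div_iff₀ hζ1).mp hw2
    have hnn : (0:ℝ) ≤ ‖w - 0‖ := norm_nonneg _
    have hεnn : 0 ≤ ε * ‖w - 0‖ := by positivity
    have htoReal : ((0:EReal)).toReal = 0 := rfl
    rw [htoReal]
    have hnorm : ‖w - 0‖ = ‖w‖ := by rw [sub_zero]
    rw [hnorm]
    nlinarith [norm_nonneg w]
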